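/- arXiv:1402.0054 — 4 statements merged into one kernel-verified Lean document; each statement's English description precedes it below -/
import Mathlib

section
/- Let G = (V, E) be a directed graph with distinguished vertices s, t. Construct an undirected bipartite graph H with vertex set V_in ∪ V_out, where V_in = {v_in : v ∈ V, v ≠ s} and V_out = {v_out : v ∈ V, v ≠ t}, and edge set {(u_out, v_in) : (u,v) ∈ E, v ≠ s, u ≠ t} ∪ {(v_in, v_out) : v ∈ V, v ≠ s, t}. Then there is a directed path from s to t in G if and only if H has a perfect matching. -/
open List in
theorem dedup_chain' {α : Type*} (r : α → α → Prop) :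
    ∀ (n : ℕ) (a : α) (l : List α), l.length ≤ n → List.Chain r a l →
      ∃ l', l' ⊆ l ∧ (a :: l').Nodup ∧ List.Chain r a l' ∧
        (a :: l').getLast (List.cons_ne_nil _ _) = (a :: l).getLast (List.cons_ne_nil _ _) := by
  intro n
  induction n with
  | zero =>
    intro a l hl _
    have : l = [] := List.length_eq_zero_iff.mp (Nat.le_zero.mp hl)
    subst this
    exact ⟨[], by simp, by simp, List.Chain.nil, rfl⟩
  | succ n ih =>
    intro a l hl hc
    by_cases ha : a ∈ l
    · obtain ⟨l1, l2, rfl⟩ := List.append_of_mem ha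
      have hc2 : List.Chain r a l2 := (List.isChain_split (l₁ := a :: l1).mp hc).2
      have hlen : l2.length ≤ n := by simp at hl ⊢; omega
      obtain ⟨l', hsub, hnd, hch, hlast⟩ := ih a l2 hlen hc2
      refine ⟨l', fun x hx => by simp [hsub hx], hnd, hch, ?_⟩
      rw [hlast]
      have : a :: (l1 ++ a :: l2) = (a :: l1) ++ (a :: l2) := by simp
      rw [List.getLast_congr _ _ this, List.getLast_append]
      · simp
      · simp
    · cases l with
      | nil => exact ⟨[], by simp, by simp, List.Chain.nil, rfl⟩
      | cons c l' =>
        replace hc : r a c ∧ List.Chain r c l' := List.isChain_cons_cons.mp hc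
        have hlen : l'.length ≤ n := by simp at hl; omega
        obtain ⟨l'', hsub, hnd, hch, hlast⟩ := ih c l' hlen hc.2
        have hsub' : c :: l'' ⊆ c :: l' := List.cons_subset_cons c hsub
        refine ⟨c :: l'', hsub', ?_, List.chain_cons.mpr ⟨hc.1, hch⟩, ?_⟩
        · exact List.nodup_cons.mpr ⟨fun hx => ha (hsub' hx), hnd⟩
        · rw [List.getLast_cons_cons, hlast, List.getLast_cons_cons]

theorem exists_perm' {V : Type*} [DecidableEq V]
    (E : V → V → Prop) (s t : V) (h : Relation.ReflTransGen E s t) :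
    ∃ σ : Equiv.Perm V, σ t = s ∧ ∀ u, u ≠ t → E u (σ u) ∨ u = σ u := by
  obtain ⟨l, hc, hlast⟩ := List.exists_isChain_cons_of_relationReflTransGen h
  obtain ⟨l', -, hnd, hch, hlast'⟩ := dedup_chain' E l.length s l le_rfl hc
  rw [hlast] at hlast'
  set L := s :: l' with hL
  refine ⟨L.formPerm, ?_, ?_⟩
  · rw [← hlast']
    exact List.formPerm_apply_getLast s l'
  · intro u hu
    by_cases hm : u ∈ L
    · obtain ⟨i, hi, rfl⟩ := List.mem_iff_getElem.mp hm
      have hi1 : i + 1 < L.length := by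
        rcases Nat.lt_or_ge (i+1) L.length with h' | h'
        · exact h'
        · exfalso
          have : i = L.length - 1 := by omega
          subst this
          apply hu
          rw [← hlast']
          rw [List.getLast_eq_getElem]
      have hfp : L.formPerm L[i] = L[i+1] := by
        rw [List.formPerm_apply_getElem L hnd i hi]
        congr 1
        exact Nat.mod_eq_of_lt hi1
      rw [hfp]
      left
      have hch' : List.Chain' E L := hch
      exact List.isChain_iff_getElem.mp hch' i hi1 
    · right
      rw [List.formPerm_apply_of_notMem hm]

theorem stmt_1 {V : Type*} [Fintype V] [DecidableEq V]
    (E : V → V → Prop) (s t : V) (hst : s ≠ t) :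
    Relation.ReflTransGen E s t ↔
      ∃ M : (SimpleGraph.fromRel
          (fun p q : ({v : V // v ≠ s} ⊕ {v : V // v ≠ t}) =>
            match p, q with
            | Sum.inr u, Sum.inl v => E u.1 v.1 ∨ u.1 = v.1
            | _, _ => False)).Subgraph,
        M.IsPerfectMatching := by
  set rel : ({v : V // v ≠ s} ⊕ {v : V // v ≠ t}) → ({v : V // v ≠ s} ⊕ {v : V // v ≠ t}) → Prop :=
    (fun p q =>
      match p, q with
      | Sum.inr u, Sum.inl v => E u.1 v.1 ∨ u.1 = v.1
      | _, _ => False) with hrel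
  constructor
  · intro h
    obtain ⟨σ, hσt, hσE⟩ := exists_perm' E s t h
    -- the bijection
    have hne : ∀ u : {v : V // v ≠ t}, σ u.1 ≠ s := by
      intro u hu
      exact u.2 (σ.injective (hu.trans hσt.symm))
    set f : {v : V // v ≠ t} → {v : V // v ≠ s} := fun u => ⟨σ u.1, hne u⟩ with hf
    have hfinj : Function.Injective f := by
      intro a b hab
      exact Subtype.ext (σ.injective (congrArg Subtype.val hab))
    have hfsurj : Function.Surjective f := by
      intro a
      have h1 : σ.symm a.1 ≠ t := by
        intro hh
        have h2 : σ (σ.symm a.1) = σ t := congrArg σ hh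
        rw [Equiv.apply_symm_apply, hσt] at h2
        exact a.2 h2
      exact ⟨⟨σ.symm a.1, h1⟩, Subtype.ext (σ.apply_symm_apply a.1)⟩
    have hfE : ∀ u, E u.1 (f u).1 ∨ u.1 = (f u).1 := fun u => hσE u.1 u.2
    refine ⟨⟨Set.univ,
      fun p q => (∃ u, p = Sum.inr u ∧ q = Sum.inl (f u)) ∨ (∃ u, q = Sum.inr u ∧ p = Sum.inl (f u)),
      ?_, fun _ => Set.mem_univ _, ?_⟩, ?_⟩
    · rintro p q (⟨u, rfl, rfl⟩ | ⟨u, rfl, rfl⟩) <;> rw [SimpleGraph.fromRel_adj]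
      · exact ⟨by simp, Or.inl (hfE u)⟩
      · exact ⟨by simp, Or.inr (hfE u)⟩
    · constructor; rintro p q (⟨u, rfl, rfl⟩ | ⟨u, rfl, rfl⟩)
      · exact Or.inr ⟨u, rfl, rfl⟩
      · exact Or.inl ⟨u, rfl, rfl⟩
    · rw [SimpleGraph.Subgraph.isPerfectMatching_iff]
      rintro (a | u)
      · refine ⟨Sum.inr (hfsurj a).choose, Or.inr ⟨_, rfl, by rw [(hfsurj a).choose_spec]⟩, ?_⟩
        rintro w (⟨u, haw, rfl⟩ | ⟨u, rfl, haw⟩)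
        · exact absurd haw (by simp)
        · have : f u = a := by injection haw with h'; exact h'.symm
          have : u = (hfsurj a).choose := hfinj (this.trans (hfsurj a).choose_spec.symm)
          rw [this]
      · refine ⟨Sum.inl (f u), Or.inl ⟨u, rfl, rfl⟩, ?_⟩
        rintro w (⟨u', hu', rfl⟩ | ⟨u', rfl, hu'⟩)
        · injection hu' with h'; rw [h']
        · exact absurd hu' (by simp)
  · rintro ⟨M, hM⟩
    rw [SimpleGraph.Subgraph.isPerfectMatching_iff] at hM
    -- extract f
    have h1 : ∀ u : {v : V // v ≠ t}, ∃ v : {v : V // v ≠ s},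
        M.Adj (Sum.inr u) (Sum.inl v) ∧ (E u.1 v.1 ∨ u.1 = v.1) := by
      intro u
      obtain ⟨w, hw, -⟩ := hM (Sum.inr u)
      have hadj := M.adj_sub hw
      rw [SimpleGraph.fromRel_adj] at hadj
      obtain ⟨hne2, hr | hr⟩ := hadj
      · cases w with
        | inl v => exact ⟨v, hw, hr⟩
        | inr w' => exact hr.elim
      · cases w <;> exact hr.elim
    choose f hfadj hfE using h1
    have hfinj : Function.Injective f := by
      intro a b hab
      obtain ⟨w, -, huniq⟩ := hM (Sum.inl (f a))
      have h1 := huniq _ (hfadj a).symm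
      have h2 := huniq _ (by rw [hab]; exact (hfadj b).symm)
      exact Sum.inr.inj (h1.trans h2.symm)
    -- iterate
    set F : V → V := fun v => if h : v = t then t else (f ⟨v, h⟩).1 with hF
    have hFne : ∀ v (h : v ≠ t), F v = (f ⟨v, h⟩).1 := by
      intro v h; simp [hF, h]
    have hFcancel : ∀ a b, a ≠ t → b ≠ t → F a = F b → a = b := by
      intro a b ha hb hab
      rw [hFne a ha, hFne b hb] at hab
      have := hfinj (Subtype.ext hab)
      injection this
    have hex : ∃ n, F^[n] s = t := by
      by_contra hn
      push_neg at hn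
      obtain ⟨i, j, hij, hije⟩ : ∃ i j : ℕ, i ≠ j ∧ F^[i] s = F^[j] s := by
        obtain ⟨i, j, hij, h⟩ := Finite.exists_ne_map_eq_of_infinite (fun n : ℕ => F^[n] s)
        exact ⟨i, j, hij, h⟩
      wlog hlt : i < j generalizing i j
      · exact this j i hij.symm hije.symm (by omega)
      have key : ∀ k d, F^[k] s = F^[k + d] s → s = F^[d] s := by
        intro k
        induction k with
        | zero => intro d hd; simpa using hd
        | succ k ih =>
          intro d hd
          apply ih
          apply hFcancel _ _ (hn _) (hn _)
          rw [show k + 1 + d = k + d + 1 by omega] at hd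
          rw [← Function.iterate_succ_apply' F k s, ← Function.iterate_succ_apply' F (k + d) s]
          exact hd
      have hs : s = F^[j - i] s := key i (j - i) (by rw [show i + (j - i) = j by omega]; exact hije)
      have hd1 : 1 ≤ j - i := by omega
      rw [show j - i = (j - i - 1) + 1 by omega, Function.iterate_succ_apply'] at hs
      have h2 := hFne (F^[j - i - 1] s) (hn _)
      rw [h2] at hs
      exact (f _).2 hs.symm
    have hRTG : ∀ n, (∀ m, m < n → F^[m] s ≠ t) → Relation.ReflTransGen E s (F^[n] s) := by
      intro n
      induction n with
      | zero => intro _; exact Relation.ReflTransGen.refl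
      | succ n ih =>
        intro hm
        have hnt : F^[n] s ≠ t := hm n (by omega)
        have step := hfE ⟨F^[n] s, hnt⟩
        have base := ih (fun m hm' => hm m (by omega))
        rw [Function.iterate_succ_apply', hFne _ hnt]
        rcases step with hE' | hEq
        · exact base.tail hE'
        · rw [← hEq]; exact base
    have hn := Nat.find_spec hex
    have := hRTG (Nat.find hex) (fun m hm' => Nat.find_min hex hm')
    rwa [hn] at this
end

section
/- Let G = (V, E) be an undirected graph and x ∈ V. Construct a bipartite graph H with parts A = {v_A : v ∈ V} and B = {v_B : v ∈ V}, edges {(u_A, v_B) : (u,v) ∈ E}, plus two extra vertices s (adjacent to all of A) and t (adjacent to all of B). Let S = {s, t} ∪ {v_A : v ∈ N(x)} ∪ {v_B : v ∈ N(x)}, where N(x) is the neighborhood of x in G. Then s and t are connected in the subgraph of H induced by S if and only if x lies in a triangle of G. -/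
theorem stmt_3 {V : Type*} (G : SimpleGraph V) (x : V) :
    let H : SimpleGraph ((V ⊕ V) ⊕ Bool) := SimpleGraph.fromRel (fun p q =>
      (∃ u v, G.Adj u v ∧ p = Sum.inl (Sum.inl u) ∧ q = Sum.inl (Sum.inr v)) ∨
      (∃ v, p = Sum.inr false ∧ q = Sum.inl (Sum.inl v)) ∨
      (∃ v, p = Sum.inl (Sum.inr v) ∧ q = Sum.inr true))
    let S : Set ((V ⊕ V) ⊕ Bool) := {w | w = Sum.inr false ∨ w = Sum.inr true ∨
      ∃ v, G.Adj x v ∧ (w = Sum.inl (Sum.inl v) ∨ w = Sum.inl (Sum.inr v))}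
    (H.induce S).Reachable ⟨Sum.inr false, Or.inl rfl⟩ ⟨Sum.inr true, Or.inr (Or.inl rfl)⟩ ↔
      ∃ y z, G.Adj x y ∧ G.Adj y z ∧ G.Adj z x := by
  intro H S
  constructor
  · intro hr
    by_contra hno
    push_neg at hno
    obtain ⟨w⟩ := hr
    have key : ∀ (p q : S) (_ : (H.induce S).Walk p q),
        (p.val = Sum.inr false ∨ ∃ v, p.val = Sum.inl (Sum.inl v)) →
        (q.val = Sum.inr false ∨ ∃ v, q.val = Sum.inl (Sum.inl v)) := by
      intro p q w
      induction w with
      | nil => exact id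
      | @cons a b c h w ih =>
        intro ha
        apply ih
        have hadj : H.Adj a.val b.val := h
        rw [SimpleGraph.fromRel_adj] at hadj
        obtain ⟨hne, hrel⟩ := hadj
        rcases ha with ha | ⟨u, ha⟩
        · -- a = s
          rcases hrel with (⟨u, v, _, h1, _⟩ | ⟨v, _, h2⟩ | ⟨v, h1, _⟩) |
              (⟨u, v, _, _, h2⟩ | ⟨v, h1, _⟩ | ⟨v, _, h2⟩) <;>
            simp_all
        · -- a = inl inl u
          rcases hrel with (⟨u', v, huv, h1, h2⟩ | ⟨v, h1, _⟩ | ⟨v, h1, _⟩) |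
              (⟨u', v, _, h1, h2⟩ | ⟨v, h1, h2⟩ | ⟨v, h1, h2⟩)
          · -- b = inl inr v with Adj u' v, u' = u; derive triangle
            exfalso
            have hu : G.Adj x u' := by
              rcases a.property with h' | h' | ⟨v'', hv'', h' | h'⟩ <;> simp_all
            have hv : G.Adj x v := by
              rcases b.property with h' | h' | ⟨v'', hv'', h' | h'⟩ <;> simp_all
            exact hno u' v hu huv hv.symm
          · simp_all
          · simp_all
          · simp_all
          · exact Or.inl h1
          · simp_all
    have := key _ _ w (Or.inl rfl)
    simp at this
  · rintro ⟨y, z, hxy, hyz, hzx⟩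
    have hyS : (Sum.inl (Sum.inl y) : (V ⊕ V) ⊕ Bool) ∈ S :=
      Or.inr (Or.inr ⟨y, hxy, Or.inl rfl⟩)
    have hzS : (Sum.inl (Sum.inr z) : (V ⊕ V) ⊕ Bool) ∈ S :=
      Or.inr (Or.inr ⟨z, hzx.symm, Or.inr rfl⟩)
    have h1 : (H.induce S).Adj ⟨Sum.inr false, Or.inl rfl⟩ ⟨Sum.inl (Sum.inl y), hyS⟩ := by
      show H.Adj _ _
      rw [SimpleGraph.fromRel_adj]
      exact ⟨by simp, Or.inl (Or.inr (Or.inl ⟨y, rfl, rfl⟩))⟩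
    have h2 : (H.induce S).Adj ⟨Sum.inl (Sum.inl y), hyS⟩ ⟨Sum.inl (Sum.inr z), hzS⟩ := by
      show H.Adj _ _
      rw [SimpleGraph.fromRel_adj]
      exact ⟨by simp, Or.inl (Or.inl ⟨y, z, hyz, rfl, rfl⟩)⟩
    have h3 : (H.induce S).Adj ⟨Sum.inl (Sum.inr z), hzS⟩ ⟨Sum.inr true, Or.inr (Or.inl rfl)⟩ := by
      show H.Adj _ _
      rw [SimpleGraph.fromRel_adj]
      exact ⟨by simp, Or.inl (Or.inr (Or.inr ⟨z, rfl, rfl⟩))⟩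
    exact (h1.reachable.trans h2.reachable).trans h3.reachable
end

section
/- Let G be a tripartite graph with parts A, B, C. Construct the bipartite graph H from G by keeping only the edges between A and C and between B and C, and adding vertices s (adjacent to all of A) and t (adjacent to all of B). For an edge (a,b) ∈ E(G) ∩ (A × B), let S = C ∪ {s, t, a, b}. Then s and t are connected in the subgraph of H induced by S if and only if there exists a vertex c ∈ C such that (a, b, c) is a triangle in G. -/
lemma walk_closed_aux {V : Type*} {G : SimpleGraph V} {T : Set V}
    (h : ∀ x y, G.Adj x y → x ∈ T → y ∈ T) :
    ∀ {u v : V}, G.Walk u v → u ∈ T → v ∈ T := by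
  intro u v w
  induction w with
  | nil => exact id
  | cons h' p ih => exact fun hu => ih (h _ _ h' hu)

theorem stmt_5 {V : Type*} (G : SimpleGraph V) (A B C : Set V)
    (hAB : Disjoint A B) (hAC : Disjoint A C) (hBC : Disjoint B C)
    (hcover : A ∪ B ∪ C = Set.univ)
    (a b : V) (ha : a ∈ A) (hb : b ∈ B) (hab : G.Adj a b) :
    let H : SimpleGraph (V ⊕ Bool) := SimpleGraph.fromRel (fun p q =>
      (∃ u v, G.Adj u v ∧ ((u ∈ A ∧ v ∈ C) ∨ (u ∈ B ∧ v ∈ C)) ∧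
          p = Sum.inl u ∧ q = Sum.inl v) ∨
      (∃ u, u ∈ A ∧ p = Sum.inr false ∧ q = Sum.inl u) ∨
      (∃ u, u ∈ B ∧ p = Sum.inl u ∧ q = Sum.inr true))
    let S : Set (V ⊕ Bool) := {w | w = Sum.inr false ∨ w = Sum.inr true ∨
      w = Sum.inl a ∨ w = Sum.inl b ∨ ∃ c ∈ C, w = Sum.inl c}
    (H.induce S).Reachable ⟨Sum.inr false, Or.inl rfl⟩ ⟨Sum.inr true, Or.inr (Or.inl rfl)⟩ ↔
      ∃ c ∈ C, G.Adj a c ∧ G.Adj b c := by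
  intro H S
  have hanb : a ∉ B := Set.disjoint_left.mp hAB ha
  have hanc : a ∉ C := Set.disjoint_left.mp hAC ha
  have hbna : b ∉ A := Set.disjoint_right.mp hAB hb
  have hbnc : b ∉ C := Set.disjoint_left.mp hBC hb
  constructor
  · intro hr
    by_contra hno
    push_neg at hno
    set T : Set S := {x | x.1 = Sum.inr false ∨ x.1 = Sum.inl a ∨
        ∃ c ∈ C, x.1 = Sum.inl c ∧ G.Adj a c} with hT
    have hclosed : ∀ x y : S, (H.induce S).Adj x y → x ∈ T → y ∈ T := by
      rintro ⟨x, hx⟩ ⟨y, hy⟩ hadj hxT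
      have hadj' : H.Adj x y := hadj
      rw [SimpleGraph.fromRel_adj] at hadj'
      obtain ⟨hne, hrel⟩ := hadj'
      simp only [hT, Set.mem_setOf_eq] at hxT ⊢
      rcases hxT with hx1 | hx1 | ⟨c, hc, hx1, hac⟩
      · subst hx1
        rcases hrel with (⟨u, v, huv, hcase, hp, hq⟩ | ⟨u, hu, hp, hq⟩ | ⟨u, hu, hp, hq⟩) |
            (⟨u, v, huv, hcase, hp, hq⟩ | ⟨u, hu, hp, hq⟩ | ⟨u, hu, hp, hq⟩)
        · simp at hp
        · subst hq
          rcases hy with h1 | h1 | h1 | h1 | ⟨c, hc, h1⟩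
          · simp at h1
          · simp at h1
          · exact Or.inr (Or.inl h1)
          · injection h1 with h1; subst h1; exact absurd hu hbna
          · injection h1 with h1; subst h1
            exact absurd hu (Set.disjoint_right.mp hAC hc)
        · simp at hp
        · simp at hq
        · simp at hq
        · simp at hq
      · subst hx1
        rcases hrel with (⟨u, v, huv, hcase, hp, hq⟩ | ⟨u, hu, hp, hq⟩ | ⟨u, hu, hp, hq⟩) |
            (⟨u, v, huv, hcase, hp, hq⟩ | ⟨u, hu, hp, hq⟩ | ⟨u, hu, hp, hq⟩)
        · injection hp with hp; subst hp; subst hq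
          rcases hcase with ⟨huA, hvC⟩ | ⟨huB, hvC⟩
          · exact Or.inr (Or.inr ⟨v, hvC, rfl, huv⟩)
          · exact absurd huB hanb
        · simp at hp
        · injection hp with hp; subst hp; exact absurd hu hanb
        · injection hq with hq; subst hq
          rcases hcase with ⟨huA, hvC⟩ | ⟨huB, hvC⟩ <;> exact absurd hvC hanc
        · injection hq with hq; subst hq; subst hp
          exact Or.inl rfl
        · simp at hq
      · subst hx1
        rcases hrel with (⟨u, v, huv, hcase, hp, hq⟩ | ⟨u, hu, hp, hq⟩ | ⟨u, hu, hp, hq⟩) |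
            (⟨u, v, huv, hcase, hp, hq⟩ | ⟨u, hu, hp, hq⟩ | ⟨u, hu, hp, hq⟩)
        · injection hp with hp; subst hp
          rcases hcase with ⟨huA, hvC⟩ | ⟨huB, hvC⟩
          · exact absurd huA (Set.disjoint_right.mp hAC hc)
          · exact absurd huB (Set.disjoint_right.mp hBC hc)
        · simp at hp
        · injection hp with hp; subst hp
          exact absurd hu (Set.disjoint_right.mp hBC hc)
        · injection hq with hq; subst hq; subst hp
          rcases hy with h1 | h1 | h1 | h1 | ⟨c', hc', h1⟩
          · simp at h1
          · simp at h1
          · exact Or.inr (Or.inl h1)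
          · injection h1 with h1; subst h1
            rcases hcase with ⟨huA, hvC⟩ | ⟨huB, hvC⟩
            · exact absurd huA hbna
            · exact absurd huv (hno c hc hac)
          · injection h1 with h1; subst h1
            rcases hcase with ⟨huA, hvC⟩ | ⟨huB, hvC⟩
            · exact absurd huA (Set.disjoint_right.mp hAC hc')
            · exact absurd huB (Set.disjoint_right.mp hBC hc')
        · injection hq with hq; subst hq
          exact absurd hu (Set.disjoint_right.mp hAC hc)
        · simp at hq
    obtain ⟨w⟩ := hr
    have ht := walk_closed_aux hclosed w (Or.inl rfl)
    simp [hT] at ht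
  · rintro ⟨c, hc, hac, hbc⟩
    have hsS : (Sum.inr false : V ⊕ Bool) ∈ S := Or.inl rfl
    have htS : (Sum.inr true : V ⊕ Bool) ∈ S := Or.inr (Or.inl rfl)
    have haS : (Sum.inl a : V ⊕ Bool) ∈ S := Or.inr (Or.inr (Or.inl rfl))
    have hbS : (Sum.inl b : V ⊕ Bool) ∈ S := Or.inr (Or.inr (Or.inr (Or.inl rfl)))
    have hcS : (Sum.inl c : V ⊕ Bool) ∈ S := Or.inr (Or.inr (Or.inr (Or.inr ⟨c, hc, rfl⟩)))
    have h1 : (H.induce S).Adj ⟨_, hsS⟩ ⟨_, haS⟩ := by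
      show H.Adj _ _
      rw [SimpleGraph.fromRel_adj]
      exact ⟨by simp, Or.inl (Or.inr (Or.inl ⟨a, ha, rfl, rfl⟩))⟩
    have h2 : (H.induce S).Adj ⟨_, haS⟩ ⟨_, hcS⟩ := by
      show H.Adj _ _
      rw [SimpleGraph.fromRel_adj]
      refine ⟨by intro h; exact hanc ((Sum.inl.inj (show (Sum.inl a : V ⊕ Bool) = Sum.inl c from h)) ▸ hc), Or.inl (Or.inl ?_)⟩
      exact ⟨a, c, hac, Or.inl ⟨ha, hc⟩, rfl, rfl⟩
    have h3 : (H.induce S).Adj ⟨_, hcS⟩ ⟨_, hbS⟩ := by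
      show H.Adj _ _
      rw [SimpleGraph.fromRel_adj]
      refine ⟨by intro h; exact hbnc ((Sum.inl.inj (show (Sum.inl c : V ⊕ Bool) = Sum.inl b from h)).symm ▸ hc), Or.inr (Or.inl ?_)⟩
      exact ⟨b, c, hbc, Or.inr ⟨hb, hc⟩, rfl, rfl⟩
    have h4 : (H.induce S).Adj ⟨_, hbS⟩ ⟨_, htS⟩ := by
      show H.Adj _ _
      rw [SimpleGraph.fromRel_adj]
      exact ⟨by simp, Or.inl (Or.inr (Or.inr ⟨b, hb, rfl, rfl⟩))⟩
    exact ((((h1.reachable.trans h2.reachable).trans h3.reachable).trans h4.reachable))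
end

section
/- Let G = (V,E) be an undirected graph, x ∈ V, and let H be the bipartite 4-layer graph with layers I, Ī, J, J̄ (each a copy of V), edges (u_I, v_J) for every (u,v) ∈ E, and edges (u_Ī, u_I), (u_J̄, u_J) for every u ∉ N(x). If x does not lie in any triangle of G, then every matching of H has size at most 2(n − |N(x)|); if x lies in a triangle of G, then every matching of H admitting no augmenting path of length at most 5 has size at least 2(n − |N(x)|) + 1. -/
/-- `p` is an augmenting path for the matching (subgraph) `M` of `H`: a path of positive
length between two unmatched vertices whose edges alternate, beginning and ending with
edges not in `M` (the `i`-th edge is in `M` iff `i` is odd). -/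
def IsAugPath {W : Type*} (H : SimpleGraph W) (M : H.Subgraph) {u v : W}
    (p : H.Walk u v) : Prop :=
  p.IsPath ∧ 0 < p.length ∧ (∀ w, ¬ M.Adj u w) ∧ (∀ w, ¬ M.Adj v w) ∧
    ∀ (i : ℕ) (h : i < p.edges.length), (p.edges.get ⟨i, h⟩ ∈ M.edgeSet ↔ Odd i)


open SimpleGraph
set_option linter.unusedSectionVars false
set_option linter.unnecessarySeqFocus false

section Aux
variable {W : Type*} {H : SimpleGraph W} {M : H.Subgraph}

lemma Muniq (hM : M.IsMatching) {a b c : W} (h1 : M.Adj a b) (h2 : M.Adj a c) : b = c :=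
  (hM (M.edge_vert h1)).unique h1 h2

lemma AP1 {a b : W}
    (hA : ¬ ∃ (u v : W) (p : H.Walk u v), IsAugPath H M p ∧ p.length ≤ 5)
    (hab : H.Adj a b) (ha : ∀ w, ¬ M.Adj a w) (hb : ∀ w, ¬ M.Adj b w) : False := by
  apply hA
  refine ⟨a, b, SimpleGraph.Walk.cons hab SimpleGraph.Walk.nil, ⟨?_, ?_, ha, hb, ?_⟩, ?_⟩
  · simp [SimpleGraph.Walk.isPath_def, hab.ne]
  · simp
  · intro i hi
    simp only [SimpleGraph.Walk.edges_cons, SimpleGraph.Walk.edges_nil, List.length] at hi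
    interval_cases i <;> simp [SimpleGraph.Subgraph.mem_edgeSet, ha b]
  · simp

lemma AP3 {a b c d : W}
    (hA : ¬ ∃ (u v : W) (p : H.Walk u v), IsAugPath H M p ∧ p.length ≤ 5)
    (h1 : H.Adj a b) (h2 : M.Adj b c) (h3 : H.Adj c d)
    (hac : a ≠ c) (had : a ≠ d) (hbd : b ≠ d)
    (ha : ∀ w, ¬ M.Adj a w) (hd : ∀ w, ¬ M.Adj d w) : False := by
  apply hA
  refine ⟨a, d, SimpleGraph.Walk.cons h1 (SimpleGraph.Walk.cons (M.adj_sub h2)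
    (SimpleGraph.Walk.cons h3 SimpleGraph.Walk.nil)), ⟨?_, ?_, ha, hd, ?_⟩, ?_⟩
  · simp [SimpleGraph.Walk.isPath_def, h1.ne, (M.adj_sub h2).ne, h3.ne, hac, had, hbd]
  · simp
  · intro i hi
    simp only [SimpleGraph.Walk.edges_cons, SimpleGraph.Walk.edges_nil, List.length] at hi
    have hMcd : ¬ M.Adj c d := fun h => hd c (M.adj_symm h)
    interval_cases i <;>
      norm_num [SimpleGraph.Subgraph.mem_edgeSet, ha b, h2, hMcd, Nat.odd_iff]
  · simp

lemma AP5 (hM : M.IsMatching) {a b c d e f : W}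
    (hA : ¬ ∃ (u v : W) (p : H.Walk u v), IsAugPath H M p ∧ p.length ≤ 5)
    (h1 : H.Adj a b) (h2 : M.Adj b c) (h3 : H.Adj c d) (h4 : M.Adj d e) (h5 : H.Adj e f)
    (haf : a ≠ f) (hbd : b ≠ d)
    (ha : ∀ w, ¬ M.Adj a w) (hf : ∀ w, ¬ M.Adj f w) : False := by
  have hac : a ≠ c := fun h => ha b (h ▸ M.adj_symm h2)
  have hae : a ≠ e := fun h => ha d (h ▸ M.adj_symm h4)
  have had : a ≠ d := fun h => ha e (h ▸ h4)
  have hfb : f ≠ b := fun h => hf c (h ▸ h2)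
  have hfd : f ≠ d := fun h => hf e (h ▸ h4)
  have hbe : b ≠ e := by intro h; subst h; exact h3.ne (Muniq hM h2 (M.adj_symm h4))
  have hce : c ≠ e := by intro h; subst h; exact hbd (Muniq hM (M.adj_symm h2) (M.adj_symm h4))
  have hcf : c ≠ f := fun h => hf b (h ▸ M.adj_symm h2)
  have hMcd : ¬ M.Adj c d := fun h => hbd (Muniq hM (M.adj_symm h2) h)
  apply hA
  refine ⟨a, f, SimpleGraph.Walk.cons h1 (SimpleGraph.Walk.cons (M.adj_sub h2)
    (SimpleGraph.Walk.cons h3 (SimpleGraph.Walk.cons (M.adj_sub h4)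
    (SimpleGraph.Walk.cons h5 SimpleGraph.Walk.nil)))), ⟨?_, ?_, ha, hf, ?_⟩, ?_⟩
  · simp [SimpleGraph.Walk.isPath_def, h1.ne, (M.adj_sub h2).ne, h3.ne, (M.adj_sub h4).ne,
      h5.ne, hac, hae, had, haf, hbd, hbe, hce, hcf, hfb.symm, hfd.symm]
  · simp
  · intro i hi
    simp only [SimpleGraph.Walk.edges_cons, SimpleGraph.Walk.edges_nil, List.length] at hi
    have hMef : ¬ M.Adj e f := fun h => hf e (M.adj_symm h)
    interval_cases i <;>
      norm_num [SimpleGraph.Subgraph.mem_edgeSet, ha b, h2, h4, hMcd, hMef, Nat.odd_iff]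
  · simp

end Aux

section Aux2
variable {V : Type*} [Fintype V] [DecidableEq V] {G : SimpleGraph V} [DecidableRel G.Adj] {x : V}

private abbrev Haux (G : SimpleGraph V) (x : V) : SimpleGraph (V × Fin 4) :=
  SimpleGraph.fromRel (fun p q =>
      (p.2 = 0 ∧ q.2 = 2 ∧ G.Adj p.1 q.1) ∨
      (p.2 = 1 ∧ q.2 = 0 ∧ p.1 = q.1 ∧ ¬ G.Adj x p.1) ∨
      (p.2 = 3 ∧ q.2 = 2 ∧ p.1 = q.1 ∧ ¬ G.Adj x p.1))

lemma N0 {u : V} {q : V × Fin 4} (h : (Haux G x).Adj (u,0) q) :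
    (q = (u,1) ∧ ¬ G.Adj x u) ∨ ∃ v, q = (v,2) ∧ G.Adj u v := by
  rw [SimpleGraph.fromRel_adj] at h
  obtain ⟨q1, q2⟩ := q
  obtain ⟨hne, h | h⟩ := h <;>
    rcases h with ⟨h1, h2, h3⟩ | ⟨h1, h2, h3, h4⟩ | ⟨h1, h2, h3, h4⟩ <;>
    simp_all

lemma N1 {u : V} {q : V × Fin 4} (h : (Haux G x).Adj (u,1) q) :
    q = (u,0) ∧ ¬ G.Adj x u := by
  rw [SimpleGraph.fromRel_adj] at h
  obtain ⟨q1, q2⟩ := q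
  obtain ⟨hne, h | h⟩ := h <;>
    rcases h with ⟨h1, h2, h3⟩ | ⟨h1, h2, h3, h4⟩ | ⟨h1, h2, h3, h4⟩ <;>
    simp_all

lemma N2 {u : V} {q : V × Fin 4} (h : (Haux G x).Adj (u,2) q) :
    (q = (u,3) ∧ ¬ G.Adj x u) ∨ ∃ v, q = (v,0) ∧ G.Adj v u := by
  rw [SimpleGraph.fromRel_adj] at h
  obtain ⟨q1, q2⟩ := q
  obtain ⟨hne, h | h⟩ := h <;>
    rcases h with ⟨h1, h2, h3⟩ | ⟨h1, h2, h3, h4⟩ | ⟨h1, h2, h3, h4⟩ <;>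
    simp_all

lemma N3 {u : V} {q : V × Fin 4} (h : (Haux G x).Adj (u,3) q) :
    q = (u,2) ∧ ¬ G.Adj x u := by
  rw [SimpleGraph.fromRel_adj] at h
  obtain ⟨q1, q2⟩ := q
  obtain ⟨hne, h | h⟩ := h <;>
    rcases h with ⟨h1, h2, h3⟩ | ⟨h1, h2, h3, h4⟩ | ⟨h1, h2, h3, h4⟩ <;>
    simp_all

lemma E02 {u v : V} (h : G.Adj u v) : (Haux G x).Adj (u,0) (v,2) := by
  rw [SimpleGraph.fromRel_adj]
  exact ⟨fun hc => by simp at hc, Or.inl (Or.inl ⟨rfl, rfl, h⟩)⟩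

lemma E10 {u : V} (h : ¬ G.Adj x u) : (Haux G x).Adj (u,1) (u,0) := by
  rw [SimpleGraph.fromRel_adj]
  exact ⟨fun hc => by simp at hc, Or.inl (Or.inr (Or.inl ⟨rfl, rfl, rfl, h⟩))⟩

lemma E32 {u : V} (h : ¬ G.Adj x u) : (Haux G x).Adj (u,3) (u,2) := by
  rw [SimpleGraph.fromRel_adj]
  exact ⟨fun hc => by simp at hc, Or.inl (Or.inr (Or.inr ⟨rfl, rfl, rfl, h⟩))⟩

lemma pne {α : Type*} {a b : α} {i j : Fin 4} (h : i ≠ j) : (a,i) ≠ (b,j) :=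
  fun he => h (congrArg Prod.snd he)

end Aux2

section Main
variable {V : Type*} [Fintype V] [DecidableEq V] {G : SimpleGraph V} [DecidableRel G.Adj] {x : V}
variable {M : (Haux G x).Subgraph}

lemma L1 (hM : M.IsMatching)
    (hA : ¬ ∃ (u v : V × Fin 4) (p : (Haux G x).Walk u v), IsAugPath (Haux G x) M p ∧ p.length ≤ 5)
    {u : V} (hu : ¬ G.Adj x u) :
    ∃ p, M.Adj (u,(0:Fin 4)) p ∧ (p = (u,1) ∨ ∃ v, p = (v,2) ∧ G.Adj x v) := by
  by_cases hc : ∃ p, M.Adj (u,(0:Fin 4)) p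
  · obtain ⟨p, hp⟩ := hc
    rcases N0 (M.adj_sub hp) with ⟨hq, -⟩ | ⟨v, rfl, hv⟩
    · exact ⟨p, hp, Or.inl hq⟩
    · by_cases hxv : G.Adj x v
      · exact ⟨(v,2), hp, Or.inr ⟨v, rfl, hxv⟩⟩
      · exfalso
        have hu1 : ∀ w, ¬ M.Adj (u,(1:Fin 4)) w := by
          intro w hw
          obtain ⟨rfl, -⟩ := N1 (M.adj_sub hw)
          exact absurd (Muniq hM hp (M.adj_symm hw)) (pne (by decide))
        have hv3 : ∀ w, ¬ M.Adj (v,(3:Fin 4)) w := by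
          intro w hw
          obtain ⟨rfl, -⟩ := N3 (M.adj_sub hw)
          exact absurd (Muniq hM (M.adj_symm hp) (M.adj_symm hw)) (pne (by decide))
        exact AP3 hA (E10 hu) hp ((E32 hxv).symm)
          (pne (by decide)) (pne (by decide)) (pne (by decide)) hu1 hv3
  · push_neg at hc
    have hu1 : ∀ w, ¬ M.Adj (u,(1:Fin 4)) w := by
      intro w hw
      obtain ⟨rfl, -⟩ := N1 (M.adj_sub hw)
      exact hc _ (M.adj_symm hw)
    exact absurd (AP1 hA (E10 hu) hu1 hc) (by simp)

lemma L2 (hM : M.IsMatching)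
    (hA : ¬ ∃ (u v : V × Fin 4) (p : (Haux G x).Walk u v), IsAugPath (Haux G x) M p ∧ p.length ≤ 5)
    {u : V} (hu : ¬ G.Adj x u) :
    ∃ p, M.Adj (u,(2:Fin 4)) p ∧ (p = (u,3) ∨ ∃ v, p = (v,0) ∧ G.Adj x v) := by
  by_cases hc : ∃ p, M.Adj (u,(2:Fin 4)) p
  · obtain ⟨p, hp⟩ := hc
    rcases N2 (M.adj_sub hp) with ⟨hq, -⟩ | ⟨v, rfl, hv⟩
    · exact ⟨p, hp, Or.inl hq⟩
    · by_cases hxv : G.Adj x v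
      · exact ⟨(v,0), hp, Or.inr ⟨v, rfl, hxv⟩⟩
      · exfalso
        have hu3 : ∀ w, ¬ M.Adj (u,(3:Fin 4)) w := by
          intro w hw
          obtain ⟨rfl, -⟩ := N3 (M.adj_sub hw)
          exact absurd (Muniq hM hp (M.adj_symm hw)) (pne (by decide))
        have hv1 : ∀ w, ¬ M.Adj (v,(1:Fin 4)) w := by
          intro w hw
          obtain ⟨rfl, -⟩ := N1 (M.adj_sub hw)
          exact absurd (Muniq hM (M.adj_symm hp) (M.adj_symm hw)) (pne (by decide))
        exact AP3 hA (E32 hu) hp ((E10 hxv).symm)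
          (pne (by decide)) (pne (by decide)) (pne (by decide)) hu3 hv1
  · push_neg at hc
    have hu3 : ∀ w, ¬ M.Adj (u,(3:Fin 4)) w := by
      intro w hw
      obtain ⟨rfl, -⟩ := N3 (M.adj_sub hw)
      exact hc _ (M.adj_symm hw)
    exact absurd (AP1 hA (E32 hu) hu3 hc) (by simp)

lemma L3 (hM : M.IsMatching)
    (hA : ¬ ∃ (u v : V × Fin 4) (p : (Haux G x).Walk u v), IsAugPath (Haux G x) M p ∧ p.length ≤ 5)
    {y z : V} (hxy : G.Adj x y) (hyz : G.Adj y z) (hzx : G.Adj z x) :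
    ∃ a b, G.Adj x a ∧ G.Adj x b ∧ M.Adj (a,(0:Fin 4)) (b,(2:Fin 4)) := by
  by_cases hy0 : ∃ p, M.Adj (y,(0:Fin 4)) p
  · obtain ⟨p, hp⟩ := hy0
    rcases N0 (M.adj_sub hp) with ⟨-, hnxy⟩ | ⟨b, rfl, hyb⟩
    · exact absurd hxy hnxy
    · by_cases hxb : G.Adj x b
      · exact ⟨y, b, hxy, hxb, hp⟩
      · -- b ∉ N(x); (b,3) unmatched
        have hb3 : ∀ w, ¬ M.Adj (b,(3:Fin 4)) w := by
          intro w hw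
          obtain ⟨rfl, -⟩ := N3 (M.adj_sub hw)
          exact absurd (Muniq hM (M.adj_symm hp) (M.adj_symm hw)) (pne (by decide))
        by_cases hz2 : ∃ q, M.Adj (z,(2:Fin 4)) q
        · obtain ⟨q, hq⟩ := hz2
          rcases N2 (M.adj_sub hq) with ⟨-, hnxz⟩ | ⟨a, rfl, haz⟩
          · exact absurd hzx.symm hnxz
          · by_cases hxa : G.Adj x a
            · exact ⟨a, z, hxa, hzx.symm, M.adj_symm hq⟩
            · exfalso
              have ha1 : ∀ w, ¬ M.Adj (a,(1:Fin 4)) w := by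
                intro w hw
                obtain ⟨rfl, -⟩ := N1 (M.adj_sub hw)
                exact absurd (Muniq hM (M.adj_symm hq) (M.adj_symm hw)) (pne (by decide))
              -- path (b,3)-(b,2)-(y,0)-(z,2)-(a,0)-(a,1)
              refine AP5 hM hA (E32 hxb) (M.adj_symm hp) (E02 hyz) hq ((E10 hxa).symm)
                (pne (by decide)) ?_ hb3 ha1
              exact fun h => hxb (by have hbz : b = z := congrArg Prod.fst h; rw [hbz]; exact hzx.symm)
        · push_neg at hz2
          -- path (b,3)-(b,2)-(y,0)-(z,2)
          refine absurd (AP3 hA (E32 hxb) (M.adj_symm hp) (E02 hyz)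
            (pne (by decide)) (pne (by decide)) ?_ hb3 hz2) (by simp)
          exact fun h => hxb (by have hbz : b = z := congrArg Prod.fst h; rw [hbz]; exact hzx.symm)
  · push_neg at hy0
    by_cases hz2 : ∃ q, M.Adj (z,(2:Fin 4)) q
    · obtain ⟨q, hq⟩ := hz2
      rcases N2 (M.adj_sub hq) with ⟨-, hnxz⟩ | ⟨a, rfl, haz⟩
      · exact absurd hzx.symm hnxz
      · by_cases hxa : G.Adj x a
        · exact ⟨a, z, hxa, hzx.symm, M.adj_symm hq⟩
        · exfalso
          have ha1 : ∀ w, ¬ M.Adj (a,(1:Fin 4)) w := by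
            intro w hw
            obtain ⟨rfl, -⟩ := N1 (M.adj_sub hw)
            exact absurd (Muniq hM (M.adj_symm hq) (M.adj_symm hw)) (pne (by decide))
          -- path (a,1)-(a,0)-(z,2)-(y,0)
          refine AP3 hA (E10 hxa) (M.adj_symm hq) (E02 hyz).symm ?_ ?_ ?_ ha1 hy0
          all_goals first
            | exact pne (by decide)
            | exact fun h => hxa (by have hay : a = y := congrArg Prod.fst h; rw [hay]; exact hxy)
    · push_neg at hz2
      exact absurd (AP1 hA (E02 hyz) hy0 hz2) (by simp)
end Main

section Count
variable {V : Type*} [Fintype V] [DecidableEq V] {G : SimpleGraph V} [DecidableRel G.Adj] {x : V}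
variable {M : (Haux G x).Subgraph}

lemma Acard : ({u : V | ¬ G.Adj x u}).ncard = Fintype.card V - G.degree x := by
  have h1 : ({u : V | ¬ G.Adj x u}).toFinset = (G.neighborFinset x)ᶜ := by
    ext v; simp [SimpleGraph.mem_neighborFinset]
  rw [Set.ncard_eq_toFinset_card', h1, Finset.card_compl, SimpleGraph.card_neighborFinset_eq_degree]

lemma part2 (hM : M.IsMatching)
    (hA : ¬ ∃ (u v : V × Fin 4) (p : (Haux G x).Walk u v), IsAugPath (Haux G x) M p ∧ p.length ≤ 5)
    {y z : V} (hxy : G.Adj x y) (hyz : G.Adj y z) (hzx : G.Adj z x) :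
    2 * (Fintype.card V - G.degree x) + 1 ≤ M.edgeSet.ncard := by
  classical
  set A : Set V := {u | ¬ G.Adj x u} with hA_def
  set g1 : V → Sym2 (V × Fin 4) := fun u =>
    if h : ∃ p, M.Adj (u,(0:Fin 4)) p ∧ (p = (u,1) ∨ ∃ v, p = (v,2) ∧ G.Adj x v)
    then s((u,(0:Fin 4)), h.choose) else s((u,(0:Fin 4)),(u,(0:Fin 4))) with hg1_def
  set g2 : V → Sym2 (V × Fin 4) := fun u =>
    if h : ∃ p, M.Adj (u,(2:Fin 4)) p ∧ (p = (u,3) ∨ ∃ v, p = (v,0) ∧ G.Adj x v)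
    then s((u,(2:Fin 4)), h.choose) else s((u,(2:Fin 4)),(u,(2:Fin 4))) with hg2_def
  have hg1 : ∀ u ∈ A, ∃ p, g1 u = s((u,(0:Fin 4)), p) ∧ M.Adj (u,(0:Fin 4)) p ∧
      (p = (u,1) ∨ ∃ v, p = (v,2) ∧ G.Adj x v) := by
    intro u hu
    have h := L1 hM hA hu
    exact ⟨h.choose, by rw [hg1_def]; simp only [dif_pos h], h.choose_spec⟩
  have hg2 : ∀ u ∈ A, ∃ p, g2 u = s((u,(2:Fin 4)), p) ∧ M.Adj (u,(2:Fin 4)) p ∧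
      (p = (u,3) ∨ ∃ v, p = (v,0) ∧ G.Adj x v) := by
    intro u hu
    have h := L2 hM hA hu
    exact ⟨h.choose, by rw [hg2_def]; simp only [dif_pos h], h.choose_spec⟩
  obtain ⟨a, b, hxa, hxb, hab⟩ := L3 hM hA hxy hyz hzx
  set S1 : Set (Sym2 (V × Fin 4)) := g1 '' A with hS1_def
  set S2 : Set (Sym2 (V × Fin 4)) := g2 '' A with hS2_def
  set S3 : Set (Sym2 (V × Fin 4)) := {s((a,(0:Fin 4)),(b,(2:Fin 4)))} with hS3_def
  have inj1 : Set.InjOn g1 A := by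
    intro u hu u' hu' he
    obtain ⟨p, hpe, hpadj, hpc⟩ := hg1 u hu
    obtain ⟨p', hpe', hpadj', hpc'⟩ := hg1 u' hu'
    rw [hpe, hpe'] at he
    rcases Sym2.eq_iff.mp he with ⟨h1, -⟩ | ⟨h1, -⟩
    · exact congrArg Prod.fst h1
    · rcases hpc' with rfl | ⟨v, rfl, -⟩ <;> exact absurd (congrArg Prod.snd h1) (by simp)
  have inj2 : Set.InjOn g2 A := by
    intro u hu u' hu' he
    obtain ⟨p, hpe, hpadj, hpc⟩ := hg2 u hu
    obtain ⟨p', hpe', hpadj', hpc'⟩ := hg2 u' hu'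
    rw [hpe, hpe'] at he
    rcases Sym2.eq_iff.mp he with ⟨h1, -⟩ | ⟨h1, -⟩
    · exact congrArg Prod.fst h1
    · rcases hpc' with rfl | ⟨v, rfl, -⟩ <;> exact absurd (congrArg Prod.snd h1) (by simp)
  have d12 : Disjoint S1 S2 := by
    rw [Set.disjoint_left]
    rintro e ⟨u, hu, rfl⟩ ⟨u', hu', he'⟩
    obtain ⟨p, hpe, hpadj, hpc⟩ := hg1 u hu
    obtain ⟨q, hqe, hqadj, hqc⟩ := hg2 u' hu'
    rw [hpe, hqe] at he'
    rcases Sym2.eq_iff.mp he' with ⟨h1, -⟩ | ⟨h1, h2⟩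
    · exact absurd (congrArg Prod.snd h1) (by simp)
    · rcases hpc with rfl | ⟨v, rfl, hv⟩
      · exact absurd (congrArg Prod.snd h1) (by simp)
      · have huv : u' = v := congrArg Prod.fst h1
        exact hu' (huv ▸ hv)
  have d3 : Disjoint (S1 ∪ S2) S3 := by
    rw [Set.disjoint_right]
    rintro e rfl hmem
    rcases hmem with ⟨u, hu, he⟩ | ⟨u, hu, he⟩
    · obtain ⟨p, hpe, hpadj, hpc⟩ := hg1 u hu
      rw [hpe] at he
      rcases Sym2.eq_iff.mp he with ⟨h1, -⟩ | ⟨h1, -⟩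
      · exact hu (by rw [show u = a from congrArg Prod.fst h1]; exact hxa)
      · exact absurd (congrArg Prod.snd h1) (by simp)
    · obtain ⟨q, hqe, hqadj, hqc⟩ := hg2 u hu
      rw [hqe] at he
      rcases Sym2.eq_iff.mp he with ⟨h1, -⟩ | ⟨h1, -⟩
      · exact absurd (congrArg Prod.snd h1) (by simp)
      · exact hu (by rw [show u = b from congrArg Prod.fst h1]; exact hxb)
  have hsub : S1 ∪ S2 ∪ S3 ⊆ M.edgeSet := by
    rintro e ((⟨u, hu, rfl⟩ | ⟨u, hu, rfl⟩) | rfl)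
    · obtain ⟨p, hpe, hpadj, -⟩ := hg1 u hu
      rw [hpe]; exact SimpleGraph.Subgraph.mem_edgeSet.mpr hpadj
    · obtain ⟨q, hqe, hqadj, -⟩ := hg2 u hu
      rw [hqe]; exact SimpleGraph.Subgraph.mem_edgeSet.mpr hqadj
    · exact SimpleGraph.Subgraph.mem_edgeSet.mpr hab
  have hcount : (S1 ∪ S2 ∪ S3).ncard = 2 * (Fintype.card V - G.degree x) + 1 := by
    rw [Set.ncard_union_eq d3 (Set.toFinite _) (Set.toFinite _),
      Set.ncard_union_eq d12 (Set.toFinite _) (Set.toFinite _),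
      hS1_def, hS2_def, Set.ncard_image_of_injOn inj1, Set.ncard_image_of_injOn inj2,
      hS3_def, Set.ncard_singleton, hA_def, Acard]
    ring
  rw [← hcount]
  exact Set.ncard_le_ncard hsub (Set.toFinite _)

end Count

section Part1
variable {V : Type*} [Fintype V] [DecidableEq V] {G : SimpleGraph V} [DecidableRel G.Adj] {x : V}
variable {M : (Haux G x).Subgraph}

lemma Medge_unique (hM : M.IsMatching) {r : V × Fin 4} {e1 e2 : Sym2 (V × Fin 4)}
    (he1 : e1 ∈ M.edgeSet) (he2 : e2 ∈ M.edgeSet) (hr1 : r ∈ e1) (hr2 : r ∈ e2) : e1 = e2 := by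
  obtain ⟨b1, rfl⟩ := Sym2.mem_iff_exists.mp hr1
  obtain ⟨b2, rfl⟩ := Sym2.mem_iff_exists.mp hr2
  rw [SimpleGraph.Subgraph.mem_edgeSet] at he1 he2
  rw [Muniq hM he1 he2]

lemma part1 (hT : ¬ ∃ y z, G.Adj x y ∧ G.Adj y z ∧ G.Adj z x) (hM : M.IsMatching) :
    M.edgeSet.ncard ≤ 2 * (Fintype.card V - G.degree x) := by
  classical
  set A : Set V := {u | ¬ G.Adj x u} with hA_def
  set U0 : Set (V × Fin 4) := (fun u => (u,(0:Fin 4))) '' A with hU0_def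
  set U2 : Set (V × Fin 4) := (fun u => (u,(2:Fin 4))) '' A with hU2_def
  have hxx : x ∈ A := fun h => G.irrefl h
  have hKey : ∀ e ∈ M.edgeSet, ∃ r, r ∈ U0 ∪ U2 ∧ r ∈ e := by
    intro e he
    induction e using Sym2.ind with
    | _ p q =>
      rw [SimpleGraph.Subgraph.mem_edgeSet] at he
      have hH := M.adj_sub he
      obtain ⟨p1, p2⟩ := p
      fin_cases p2
      · rcases N0 hH with ⟨rfl, hp1⟩ | ⟨v, rfl, hv⟩
        · exact ⟨(p1, 0), Or.inl ⟨p1, hp1, rfl⟩, Sym2.mem_mk_left _ _⟩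
        · by_cases hxp : G.Adj x p1
          · have hxv : ¬ G.Adj x v := fun hc => hT ⟨p1, v, hxp, hv, hc.symm⟩
            exact ⟨(v, 2), Or.inr ⟨v, hxv, rfl⟩, Sym2.mem_mk_right _ _⟩
          · exact ⟨(p1, 0), Or.inl ⟨p1, hxp, rfl⟩, Sym2.mem_mk_left _ _⟩
      · obtain ⟨rfl, hp1⟩ := N1 hH
        exact ⟨(p1, 0), Or.inl ⟨p1, hp1, rfl⟩, Sym2.mem_mk_right _ _⟩
      · rcases N2 hH with ⟨rfl, hp1⟩ | ⟨v, rfl, hv⟩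
        · exact ⟨(p1, 2), Or.inr ⟨p1, hp1, rfl⟩, Sym2.mem_mk_left _ _⟩
        · by_cases hxp : G.Adj x p1
          · have hxv : ¬ G.Adj x v := fun hc => hT ⟨v, p1, hc, hv, hxp.symm⟩
            exact ⟨(v, 0), Or.inl ⟨v, hxv, rfl⟩, Sym2.mem_mk_right _ _⟩
          · exact ⟨(p1, 2), Or.inr ⟨p1, hxp, rfl⟩, Sym2.mem_mk_left _ _⟩
      · obtain ⟨rfl, hp1⟩ := N3 hH
        exact ⟨(p1, 2), Or.inr ⟨p1, hp1, rfl⟩, Sym2.mem_mk_right _ _⟩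
  set f : Sym2 (V × Fin 4) → V × Fin 4 := fun e =>
    if h : ∃ r, r ∈ U0 ∪ U2 ∧ r ∈ e then h.choose else (x, (0:Fin 4)) with hf_def
  have hfs : ∀ e ∈ M.edgeSet, f e ∈ U0 ∪ U2 ∧ f e ∈ e := by
    intro e he
    have h : ∃ r, r ∈ U0 ∪ U2 ∧ r ∈ e := hKey e he
    rw [hf_def]
    simp only [dif_pos h]
    exact h.choose_spec
  have hle : M.edgeSet.ncard ≤ (U0 ∪ U2).ncard := by
    apply Set.ncard_le_ncard_of_injOn f (fun e he => (hfs e he).1)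
    · intro e1 he1 e2 he2 heq
      exact Medge_unique hM he1 he2 (hfs e1 he1).2 (heq ▸ (hfs e2 he2).2)
  have hdisj : Disjoint U0 U2 := by
    rw [Set.disjoint_left]
    rintro p ⟨u, hu, rfl⟩ ⟨u', hu', he⟩
    exact absurd (congrArg Prod.snd he) (by simp)
  have hcard : (U0 ∪ U2).ncard = 2 * (Fintype.card V - G.degree x) := by
    rw [Set.ncard_union_eq hdisj (Set.toFinite _) (Set.toFinite _), hU0_def, hU2_def,
      Set.ncard_image_of_injOn (fun a _ b _ h => congrArg Prod.fst h),
      Set.ncard_image_of_injOn (fun a _ b _ h => congrArg Prod.fst h), hA_def, Acard]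
    ring
  rw [← hcard]
  exact hle

end Part1


theorem stmt_11 {V : Type*} [Fintype V] [DecidableEq V]
    (G : SimpleGraph V) [DecidableRel G.Adj] (x : V) :
    let H : SimpleGraph (V × Fin 4) := SimpleGraph.fromRel (fun p q =>
      (p.2 = 0 ∧ q.2 = 2 ∧ G.Adj p.1 q.1) ∨
      (p.2 = 1 ∧ q.2 = 0 ∧ p.1 = q.1 ∧ ¬ G.Adj x p.1) ∨
      (p.2 = 3 ∧ q.2 = 2 ∧ p.1 = q.1 ∧ ¬ G.Adj x p.1))
    ((¬ ∃ y z, G.Adj x y ∧ G.Adj y z ∧ G.Adj z x) →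
      ∀ M : H.Subgraph, M.IsMatching →
        M.edgeSet.ncard ≤ 2 * (Fintype.card V - G.degree x)) ∧
    ((∃ y z, G.Adj x y ∧ G.Adj y z ∧ G.Adj z x) →
      ∀ M : H.Subgraph, M.IsMatching →
        (¬ ∃ (u v : V × Fin 4) (p : H.Walk u v), IsAugPath H M p ∧ p.length ≤ 5) →
        2 * (Fintype.card V - G.degree x) + 1 ≤ M.edgeSet.ncard) := by
  intro H
  refine ⟨fun hT M hM => part1 hT hM, fun htri M hM hA => ?_⟩
  obtain ⟨y, z, hxy, hyz, hzx⟩ := htri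
  exact part2 hM hA hxy hyz hzx
end
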